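/- arXiv:1305.1792 — 5 statements merged into one kernel-verified Lean document; each statement's English description precedes it below -/
import Mathlib

section
/- Let Λ = Λ_- ∪ Λ_+ be a lattice of Majorana sites with a reflection ϑ exchanging Λ_- and Λ_+, implemented as an anti-unitary on the Hilbert space with ϑ(c_j) = c_{ϑj}. Then for any A in the algebra 𝔄_- generated by {c_j : j ∈ Λ_-}, one has Tr(A ϑ(A)) ≥ 0. -/
open Matrix
open scoped ComplexOrder

noncomputable section
namespace RPaux

variable {n d : ℕ} (c : Fin n → Matrix (Fin d) (Fin d) ℂ)

def P (l : List (Fin n)) : Matrix (Fin d) (Fin d) ℂ := (l.map c).prod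

lemma P_nil : P c [] = 1 := rfl

lemma P_cons (i : Fin n) (l : List (Fin n)) : P c (i :: l) = c i * P c l := rfl

lemma P_append (l l' : List (Fin n)) : P c (l ++ l') = P c l * P c l' := by
  simp [P]

variable (hClif : ∀ i j, c i * c j + c j * c i = if i = j then (2 : ℂ) • 1 else 0)

include hClif

lemma c_sq (i : Fin n) : c i * c i = 1 := by
  have h := hClif i i
  rw [if_pos rfl] at h
  have h2 : (2 : ℂ) • (c i * c i) = (2 : ℂ) • (1 : Matrix (Fin d) (Fin d) ℂ) := by
    rw [two_smul]; exact h
  exact smul_right_injective _ two_ne_zero h2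

lemma c_anticomm {i j : Fin n} (h : i ≠ j) : c i * c j = -(c j * c i) := by
  have h2 := hClif i j
  rw [if_neg h] at h2
  linear_combination (norm := noncomm_ring) h2

omit hClif

def sgn (i : Fin n) (l : List (Fin n)) : ℂ :=
  (l.map (fun j => if j = i then (1 : ℂ) else -1)).prod

lemma sgn_nil (i : Fin n) : sgn i ([] : List (Fin n)) = 1 := rfl

lemma sgn_cons (i j : Fin n) (l : List (Fin n)) :
    sgn i (j :: l) = (if j = i then (1 : ℂ) else -1) * sgn i l := rfl

lemma sgn_cases (i : Fin n) (l : List (Fin n)) : sgn i l = 1 ∨ sgn i l = -1 := by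
  induction l with
  | nil => left; rfl
  | cons j t ih =>
    rw [sgn_cons]
    rcases ih with h | h <;> rw [h] <;> by_cases hj : j = i <;> simp [hj]

lemma sgn_eq_pow (i : Fin n) (l : List (Fin n)) :
    sgn i l = (-1 : ℂ) ^ (l.length - l.count i) := by
  induction l with
  | nil => rfl
  | cons j t ih =>
    rw [sgn_cons, ih]
    by_cases hj : j = i
    · subst hj
      rw [if_pos rfl, one_mul]
      congr 1
      simp [List.count_cons, Nat.succ_sub_succ]
    · rw [if_neg hj]
      have hc : (j :: t).count i = t.count i := by
        simp [List.count_cons, hj]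
      rw [hc]
      have hle : t.count i ≤ t.length := List.count_le_length
      rw [List.length_cons, Nat.succ_sub hle, pow_succ]
      ring

include hClif

lemma c_comm (i : Fin n) (l : List (Fin n)) :
    c i * P c l = sgn i l • (P c l * c i) := by
  induction l with
  | nil => simp [P_nil, sgn_nil]
  | cons j t ih =>
    have hij : c i * c j = (if j = i then (1 : ℂ) else -1) • (c j * c i) := by
      by_cases h : j = i
      · subst h; simp
      · rw [if_neg h, c_anticomm c hClif (fun hh => h hh.symm)]; simp
    rw [P_cons, ← mul_assoc, hij, smul_mul_assoc, mul_assoc, ih, mul_smul_comm, smul_smul,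
      sgn_cons, mul_assoc]

lemma trace_zero_of_sgn (i : Fin n) (l : List (Fin n)) (h : sgn i l = -1) :
    Matrix.trace (P c l) = 0 := by
  have h1 : P c l = sgn i l • (c i * (P c l * c i)) := by
    rw [← mul_smul_comm, ← c_comm c hClif, ← mul_assoc, c_sq c hClif, one_mul]
  have h2 : Matrix.trace (P c l) = sgn i l * Matrix.trace (P c l) := by
    conv_lhs => rw [h1]
    rw [Matrix.trace_smul, smul_eq_mul, Matrix.trace_mul_comm, mul_assoc, c_sq c hClif, mul_one]
  rw [h, neg_one_mul] at h2
  exact CharZero.eq_neg_self_iff.mp h2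

lemma trace_vanish (hn : Even n) {l : List (Fin n)} (hodd : ∃ i, Odd (l.count i)) :
    Matrix.trace (P c l) = 0 := by
  obtain ⟨i, hi⟩ := hodd
  rcases Nat.even_or_odd l.length with he | ho
  · refine trace_zero_of_sgn c hClif i l ?_
    rw [sgn_eq_pow]
    exact Odd.neg_one_pow (Nat.Even.sub_odd (List.count_le_length) he hi)
  · have hj : ∃ j, Even (l.count j) := by
      by_contra hcon
      push_neg at hcon
      simp only [Nat.not_even_iff_odd] at hcon
      have hsum : ∑ j, l.count j = l.length := by
        have := Multiset.sum_count_eq_card (s := (Finset.univ : Finset (Fin n)))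
          (m := (l : Multiset (Fin n))) (fun a _ => Finset.mem_univ a)
        simpa using this
      have hmod : l.length % 2 = n % 2 := by
        rw [← hsum, Finset.sum_nat_mod]
        have : ∀ j : Fin n, l.count j % 2 = 1 := fun j => Nat.odd_iff.mp (hcon j)
        simp [this, Finset.sum_const, Finset.card_univ]
      have hon := Nat.odd_iff.mp ho
      have hen := Nat.even_iff.mp hn
      omega
    obtain ⟨j, hje⟩ := hj
    refine trace_zero_of_sgn c hClif j l ?_
    rw [sgn_eq_pow]
    exact Odd.neg_one_pow (Nat.Odd.sub_even (List.count_le_length) ho hje)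

lemma P_scalar : ∀ (k : ℕ) (l : List (Fin n)), l.length ≤ k → (∀ i, Even (l.count i)) →
    ∃ ε : ℂ, (ε = 1 ∨ ε = -1) ∧ P c l = ε • 1 := by
  intro k
  induction k with
  | zero =>
    intro l hl _
    have : l = [] := List.eq_nil_of_length_eq_zero (Nat.le_zero.mp hl)
    exact ⟨1, Or.inl rfl, by simp [this, P_nil]⟩
  | succ k ih =>
    intro l hl hev
    match l with
    | [] => exact ⟨1, Or.inl rfl, by simp [P_nil]⟩
    | i :: t =>
      have hit : i ∈ t := by
        have h := hev i
        rw [List.count_cons_self] at h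
        rw [← List.count_pos_iff]
        rcases Nat.eq_zero_or_pos (t.count i) with h0 | h0
        · rw [h0] at h; simp at h
        · exact h0
      obtain ⟨a, b, rfl⟩ := List.append_of_mem hit
      have h1 : P c (i :: (a ++ i :: b)) = sgn i a • P c (a ++ b) := by
        rw [P_cons, P_append, P_cons, ← mul_assoc, c_comm c hClif i a, smul_mul_assoc,
          mul_assoc (P c a), ← mul_assoc (c i), c_sq c hClif, one_mul, ← P_append]
      have hlen : (a ++ b).length ≤ k := by
        simp only [List.length_cons, List.length_append] at hl ⊢
        omega
      have hev' : ∀ j, Even ((a ++ b).count j) := by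
        intro j
        have h := hev j
        simp only [List.count_cons, List.count_append] at h ⊢
        rw [Nat.even_iff] at h ⊢
        by_cases hij : i = j <;> simp [hij] at h ⊢ <;> omega
      obtain ⟨ε, hε, hP⟩ := ih (a ++ b) hlen hev'
      refine ⟨sgn i a * ε, ?_, ?_⟩
      · rcases sgn_cases i a with h | h <;> rcases hε with h' | h' <;> rw [h, h'] <;> norm_num
      · rw [h1, hP, smul_smul]

lemma trace_mul_of_disjoint (hn : Even n) {l l' : List (Fin n)} {S T : Finset (Fin n)}
    (hS : ∀ i ∈ l, i ∈ S) (hT : ∀ i ∈ l', i ∈ T) (hdisj : Disjoint S T) :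
    Matrix.trace (P c l * P c l') * (d : ℂ) =
      Matrix.trace (P c l) * Matrix.trace (P c l') := by
  have hcount : ∀ i, (l ++ l').count i = l.count i + l'.count i := fun i =>
    List.count_append ..
  by_cases h1 : ∃ i, Odd (l.count i)
  · obtain ⟨i, hi⟩ := h1
    have hil : i ∈ l := by
      rw [← List.count_pos_iff]
      rcases Nat.eq_zero_or_pos (l.count i) with h0 | h0
      · rw [h0] at hi; simp at hi
      · exact h0
    have hil' : i ∉ l' := fun hmem =>
      (Finset.disjoint_left.mp hdisj (hS i hil)) (hT i hmem)
    have hcl' : l'.count i = 0 := List.count_eq_zero_of_not_mem hil'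
    have hoddfull : Odd ((l ++ l').count i) := by rw [hcount, hcl', Nat.add_zero]; exact hi
    rw [← P_append, trace_vanish c hClif hn ⟨i, hoddfull⟩,
      trace_vanish c hClif hn ⟨i, hi⟩, zero_mul, zero_mul]
  · by_cases h2 : ∃ i, Odd (l'.count i)
    · obtain ⟨i, hi⟩ := h2
      have hil' : i ∈ l' := by
        rw [← List.count_pos_iff]
        rcases Nat.eq_zero_or_pos (l'.count i) with h0 | h0
        · rw [h0] at hi; simp at hi
        · exact h0
      have hil : i ∉ l := fun hmem =>
        (Finset.disjoint_right.mp hdisj (hT i hil')) (hS i hmem)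
      have hcl : l.count i = 0 := List.count_eq_zero_of_not_mem hil
      have hoddfull : Odd ((l ++ l').count i) := by rw [hcount, hcl, Nat.zero_add]; exact hi
      rw [← P_append, trace_vanish c hClif hn ⟨i, hoddfull⟩,
        trace_vanish c hClif hn ⟨i, hi⟩, zero_mul, mul_zero]
    · push_neg at h1 h2
      simp only [Nat.not_odd_iff_even] at h1 h2
      obtain ⟨ε, _, hP⟩ := P_scalar c hClif l.length l le_rfl h1
      obtain ⟨ε', _, hP'⟩ := P_scalar c hClif l'.length l' le_rfl h2
      rw [hP, hP']
      simp only [smul_mul_smul_comm, mul_one, Matrix.trace_smul, Matrix.trace_one, smul_eq_mul]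
      simp [Fintype.card_fin]
      ring

end RPaux

open Matrix
open scoped ComplexOrder


/-- The ordered Majorana monomial `M_β = c_{i₁} c_{i₂} ⋯ c_{i_k}` associated to the
subset `β = {i₁ < i₂ < ⋯ < i_k}` of sites. -/
def cliffordMonomial {m d : ℕ} (c : Fin m → Matrix (Fin d) (Fin d) ℂ)
    (β : Finset (Fin m)) : Matrix (Fin d) (Fin d) ℂ :=
  ((β.sort (· ≤ ·)).map c).prod

/-- The matrix exponential. -/
def mexp {d : ℕ} (A : Matrix (Fin d) (Fin d) ℂ) : Matrix (Fin d) (Fin d) ℂ :=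
  NormedSpace.exp A

/-- The even subalgebra `𝔄(B)^even`: the subalgebra generated by products of
two Majoranas at sites in `B` (equivalently, by even monomials). -/
def evenAlgebra {m d : ℕ} (c : Fin m → Matrix (Fin d) (Fin d) ℂ)
    (B : Finset (Fin m)) : Subalgebra ℂ (Matrix (Fin d) (Fin d) ℂ) :=
  Algebra.adjoin ℂ {x | ∃ i ∈ B, ∃ j ∈ B, x = c i * c j}

/-- The full subalgebra `𝔄(B)` generated by the Majoranas at sites in `B`. -/
def majoranaAlgebra {m d : ℕ} (c : Fin m → Matrix (Fin d) (Fin d) ℂ)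
    (B : Finset (Fin m)) : Subalgebra ℂ (Matrix (Fin d) (Fin d) ℂ) :=
  Algebra.adjoin ℂ (c '' ↑B)

/-- Reflection Positivity I: for `A` in the algebra generated by the Majoranas
at sites in `Λ₋`, one has `Tr(A ϑ(A)) ≥ 0`. -/
theorem reflection_positivity_I
    (N : ℕ) (c : Fin (2 * N) → Matrix (Fin (2 ^ N)) (Fin (2 ^ N)) ℂ)
    (hClif : ∀ i j, c i * c j + c j * c i = if i = j then (2 : ℂ) • 1 else 0)
    (hSA : ∀ i, (c i)ᴴ = c i)
    (Λm Λp : Finset (Fin (2 * N))) (hdisj : Disjoint Λm Λp)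
    (hunion : Λm ∪ Λp = Finset.univ)
    (ρ : Equiv.Perm (Fin (2 * N))) (hρ : ∀ j, ρ (ρ j) = j)
    (hρm : ∀ j ∈ Λm, ρ j ∈ Λp)
    (θ : Matrix (Fin (2 ^ N)) (Fin (2 ^ N)) ℂ → Matrix (Fin (2 ^ N)) (Fin (2 ^ N)) ℂ)
    (hθadd : ∀ A B, θ (A + B) = θ A + θ B)
    (hθsmul : ∀ (z : ℂ) A, θ (z • A) = (starRingEnd ℂ) z • θ A)
    (hθmul : ∀ A B, θ (A * B) = θ A * θ B)
    (hθstar : ∀ A, θ Aᴴ = (θ A)ᴴ)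
    (hθtr : ∀ A, Matrix.trace (θ A) = (starRingEnd ℂ) (Matrix.trace A))
    (hθc : ∀ j, θ (c j) = c (ρ j))
    (A : Matrix (Fin (2 ^ N)) (Fin (2 ^ N)) ℂ)
    (hA : A ∈ majoranaAlgebra c Λm) :
    0 ≤ Matrix.trace (A * θ A) := by
  classical
  -- dispose of the trivial case N = 0 (1×1 matrices)
  rcases Nat.eq_zero_or_pos N with rfl | hN
  · have hsub : ∀ M : Matrix (Fin (2 ^ (0:ℕ))) (Fin (2 ^ (0:ℕ))) ℂ,
        M = Matrix.trace M • (1 : Matrix (Fin (2 ^ (0:ℕ))) (Fin (2 ^ (0:ℕ))) ℂ) := by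
      intro M
      have hsing : ∀ i j : Fin (2 ^ (0:ℕ)), i = j := by
        intro i j
        have hi : (i : ℕ) < 1 := by simpa using i.isLt
        have hj : (j : ℕ) < 1 := by simpa using j.isLt
        exact Fin.ext (by omega)
      ext i j
      have hij : i = j := hsing i j
      subst hij
      have htr : Matrix.trace M = M i i := by
        rw [Matrix.trace]
        rw [Finset.sum_eq_single i (fun b _ hb => absurd (hsing b i) hb)
          (fun h => absurd (Finset.mem_univ i) h)]
        rfl
      simp [htr, Matrix.smul_apply, Matrix.one_apply]
    have hA1 : A = Matrix.trace A • 1 := hsub A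
    have hAB : A * θ A = Matrix.trace A • θ A := by
      nth_rewrite 1 [hA1]
      rw [smul_mul_assoc, one_mul]
    rw [hAB, Matrix.trace_smul, smul_eq_mul, hθtr, Complex.mul_conj]
    exact Complex.zero_le_real.mpr (Complex.normSq_nonneg _)
  -- main case N ≥ 1
  · have hEvenn : Even (2 * N) := ⟨N, by omega⟩
    have hθ1 : θ (1 : Matrix (Fin (2 ^ N)) (Fin (2 ^ N)) ℂ) = 1 := by
      have hpos : 0 < 2 * N := by omega
      have h1 : θ (c ⟨0, hpos⟩ * c ⟨0, hpos⟩) = 1 := by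
        rw [hθmul, hθc, RPaux.c_sq c hClif]
      rwa [RPaux.c_sq c hClif] at h1
    have hθP : ∀ l : List (Fin (2 * N)), θ (RPaux.P c l) = RPaux.P c (l.map ρ) := by
      intro l
      induction l with
      | nil => simpa [RPaux.P_nil] using hθ1
      | cons i t ih =>
        rw [RPaux.P_cons, hθmul, hθc, ih, List.map_cons, RPaux.P_cons]
    set S : Set (Matrix (Fin (2 ^ N)) (Fin (2 ^ N)) ℂ) :=
      {X | ∃ l : List (Fin (2 * N)), (∀ i ∈ l, i ∈ Λm) ∧ X = RPaux.P c l} with hS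
    have hmulS : ∀ x ∈ Submodule.span ℂ S, ∀ y ∈ Submodule.span ℂ S,
        x * y ∈ Submodule.span ℂ S := by
      intro x hx
      refine Submodule.span_induction
        (p := fun x _ => ∀ y ∈ Submodule.span ℂ S, x * y ∈ Submodule.span ℂ S)
        ?_ ?_ ?_ ?_ hx
      · rintro x ⟨l, hl, rfl⟩ y hy
        refine Submodule.span_induction
          (p := fun y _ => RPaux.P c l * y ∈ Submodule.span ℂ S) ?_ ?_ ?_ ?_ hy
        · rintro y ⟨l', hl', rfl⟩
          refine Submodule.subset_span ⟨l ++ l', ?_, (RPaux.P_append c l l').symm⟩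
          intro i hi
          rcases List.mem_append.mp hi with h | h
          · exact hl i h
          · exact hl' i h
        · simp
        · intro a b _ _ ha hb
          rw [mul_add]; exact Submodule.add_mem _ ha hb
        · intro r a _ ha
          rw [mul_smul_comm]; exact Submodule.smul_mem _ _ ha
      · intro y _; rw [zero_mul]; exact Submodule.zero_mem _
      · intro a b _ _ ha hb y hy
        rw [add_mul]; exact Submodule.add_mem _ (ha y hy) (hb y hy)
      · intro r a _ ha y hy
        rw [smul_mul_assoc]; exact Submodule.smul_mem _ _ (ha y hy)
    have hspanA : A ∈ Submodule.span ℂ S := by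
      refine Algebra.adjoin_induction ?_ ?_ ?_ ?_ hA
      · rintro x ⟨i, hi, rfl⟩
        exact Submodule.subset_span ⟨[i], by simpa using hi, by simp [RPaux.P]⟩
      · intro r
        rw [Algebra.algebraMap_eq_smul_one]
        exact Submodule.smul_mem _ _ (Submodule.subset_span ⟨[], by simp, rfl⟩)
      · intro x y _ _ hx hy
        exact Submodule.add_mem _ hx hy
      · intro x y hx' hy' hx hy
        exact hmulS x hx y hy
    have hθ0 : θ 0 = 0 := by
      have h := hθsmul 0 0
      simpa using h
    have hkey : ∀ X ∈ Submodule.span ℂ S, ∀ Y ∈ Submodule.span ℂ S,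
        Matrix.trace (X * θ Y) * ((2:ℂ) ^ N) =
          Matrix.trace X * (starRingEnd ℂ) (Matrix.trace Y) := by
      intro X hX
      refine Submodule.span_induction
        (p := fun X _ => ∀ Y ∈ Submodule.span ℂ S,
          Matrix.trace (X * θ Y) * ((2:ℂ) ^ N) =
            Matrix.trace X * (starRingEnd ℂ) (Matrix.trace Y)) ?_ ?_ ?_ ?_ hX
      · rintro X ⟨l, hl, rfl⟩ Y hY
        refine Submodule.span_induction
          (p := fun Y _ => Matrix.trace (RPaux.P c l * θ Y) * ((2:ℂ) ^ N) =
            Matrix.trace (RPaux.P c l) * (starRingEnd ℂ) (Matrix.trace Y)) ?_ ?_ ?_ ?_ hY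
        · rintro Y ⟨l', hl', rfl⟩
          rw [hθP l']
          have hT : ∀ i ∈ l'.map ρ, i ∈ Λp := by
            intro i hi
            obtain ⟨j, hj, rfl⟩ := List.mem_map.mp hi
            exact hρm j (hl' j hj)
          have hcore := RPaux.trace_mul_of_disjoint c hClif hEvenn hl hT hdisj
          have hd : ((2 ^ N : ℕ) : ℂ) = (2:ℂ) ^ N := by push_cast; ring
          rw [hd] at hcore
          rw [hcore, ← hθP l', hθtr]
        · simp [hθ0]
        · intro a b _ _ ha hb
          rw [hθadd, mul_add, Matrix.trace_add, Matrix.trace_add, _root_.map_add]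
          linear_combination ha + hb
        · intro r a _ ha
          rw [hθsmul, mul_smul_comm, Matrix.trace_smul, smul_eq_mul, Matrix.trace_smul,
            smul_eq_mul, _root_.map_mul]
          linear_combination (starRingEnd ℂ) r * ha
      · intro Y _; simp
      · intro a b _ _ ha hb Y hY
        rw [add_mul, Matrix.trace_add, Matrix.trace_add]
        linear_combination ha Y hY + hb Y hY
      · intro r a _ ha Y hY
        rw [smul_mul_assoc, Matrix.trace_smul, smul_eq_mul, Matrix.trace_smul, smul_eq_mul]
        linear_combination r * ha Y hY
    have h := hkey A hspanA A hspanA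
    rw [Complex.mul_conj] at h
    have h2N : ((2:ℂ) ^ N) ≠ 0 := by positivity
    have ht : Matrix.trace (A * θ A) =
        ((Complex.normSq (Matrix.trace A)) : ℂ) / ((2:ℂ) ^ N) :=
      (eq_div_iff h2N).mpr h
    have ht2 : ((Complex.normSq (Matrix.trace A)) : ℂ) / ((2:ℂ) ^ N) =
        ((Complex.normSq (Matrix.trace A) / 2 ^ N : ℝ) : ℂ) := by
      push_cast
      ring
    rw [ht, ht2]
    exact Complex.zero_le_real.mpr (div_nonneg (Complex.normSq_nonneg _) (by positivity))

end
end

section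
/- For A ∈ 𝔄_- expanded in the monomial basis as A = Σ_β a_β M_β, one has Tr(A ϑ(A)) = 2^N |a_0|², where a_0 is the coefficient of the identity. -/
open Matrix
open scoped ComplexOrder

noncomputable section

variable {m d : ℕ} (c : Fin m → Matrix (Fin d) (Fin d) ℂ)

lemma clif_sq
    (hClif : ∀ i j, c i * c j + c j * c i = if i = j then (2 : ℂ) • 1 else 0)
    (i : Fin m) : c i * c i = 1 := by
  have h := hClif i i
  rw [if_pos rfl] at h
  have h2 : (2:ℂ) • (c i * c i) = (2:ℂ) • (1 : Matrix (Fin d) (Fin d) ℂ) := by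
    rw [two_smul]; exact h
  exact smul_right_injective (Matrix (Fin d) (Fin d) ℂ) (two_ne_zero) h2

lemma clif_anti
    (hClif : ∀ i j, c i * c j + c j * c i = if i = j then (2 : ℂ) • 1 else 0)
    {i j : Fin m} (hij : i ≠ j) : c i * c j = -(c j * c i) := by
  have h := hClif i j
  rw [if_neg hij] at h
  exact eq_neg_of_add_eq_zero_left h

lemma clif_comm_list
    (hClif : ∀ i j, c i * c j + c j * c i = if i = j then (2 : ℂ) • 1 else 0)
    (l : List (Fin m)) (i : Fin m) (hi : i ∉ l) :
    c i * (l.map c).prod = ((-1:ℂ)^l.length) • ((l.map c).prod * c i) := by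
  induction l with
  | nil => simp
  | cons j t ih =>
    have hij : i ≠ j := fun h => hi (h ▸ (List.mem_cons_self : j ∈ j :: t))
    have hit : i ∉ t := fun h => hi (List.mem_cons_of_mem _ h)
    simp only [List.map_cons, List.prod_cons, List.length_cons]
    rw [← mul_assoc, clif_anti c hClif hij, neg_mul, mul_assoc, ih hit,
      mul_smul_comm, pow_succ, ← neg_smul]
    ring_nf
    rw [mul_assoc]

lemma clif_trace_prod_zero (hm : Even m)
    (hClif : ∀ i j, c i * c j + c j * c i = if i = j then (2 : ℂ) • 1 else 0)
    (l : List (Fin m)) (hnd : l.Nodup) (hne : l ≠ []) :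
    Matrix.trace ((l.map c).prod) = 0 := by
  rcases Nat.even_or_odd l.length with he | ho
  · obtain ⟨i, t, rfl⟩ := List.exists_cons_of_ne_nil hne
    have hit : i ∉ t := (List.nodup_cons.mp hnd).1
    have htodd : Odd t.length := by
      rcases Nat.even_or_odd t.length with h | h
      · exfalso
        rw [List.length_cons, Nat.even_add_one, Nat.not_even_iff_odd] at he
        exact (Nat.not_even_iff_odd.mpr he) h
      · exact h
    have hcomm := clif_comm_list c hClif t i hit
    rw [htodd.neg_one_pow, neg_smul, one_smul] at hcomm
    simp only [List.map_cons, List.prod_cons]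
    have h1 : Matrix.trace (c i * (t.map c).prod)
        = -Matrix.trace (c i * (t.map c).prod) := by
      conv_lhs => rw [Matrix.trace_mul_comm]
      nth_rewrite 1 [← neg_neg ((t.map c).prod * c i)]
      rw [← hcomm, Matrix.trace_neg]
    linear_combination h1 / 2
  · -- odd length: pick j ∉ l
    have hlt : l.length < m := by
      have hle : l.length ≤ m := by
        simpa using List.Nodup.length_le_card hnd
      rcases lt_or_eq_of_le hle with h | h
      · exact h
      · exact absurd (h ▸ ho) (Nat.not_odd_iff_even.mpr hm)
    have : l.toFinset.card < Fintype.card (Fin m) := by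
      calc l.toFinset.card ≤ l.length := l.toFinset_card_le
        _ < m := hlt
        _ = Fintype.card (Fin m) := (Fintype.card_fin m).symm
    have hex : ∃ j, j ∉ l := by
      by_contra h
      push_neg at h
      have hsub : (Finset.univ : Finset (Fin m)) ⊆ l.toFinset :=
        fun x _ => List.mem_toFinset.mpr (h x)
      have hcard := Finset.card_le_card hsub
      rw [Finset.card_univ, Fintype.card_fin] at hcard
      have htf := l.toFinset_card_le
      omega
    obtain ⟨j, hj⟩ := hex
    have hcomm := clif_comm_list c hClif l j hj
    rw [ho.neg_one_pow, neg_smul, one_smul] at hcomm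
    have key : Matrix.trace ((l.map c).prod) = - Matrix.trace ((l.map c).prod) := by
      calc Matrix.trace ((l.map c).prod)
          = Matrix.trace ((c j * c j) * (l.map c).prod) := by
            rw [clif_sq c hClif, one_mul]
        _ = Matrix.trace (c j * (c j * (l.map c).prod)) := by rw [mul_assoc]
        _ = Matrix.trace ((c j * (l.map c).prod) * c j) := by
            rw [Matrix.trace_mul_comm]
        _ = Matrix.trace (-((l.map c).prod * c j) * c j) := by rw [hcomm]
        _ = - Matrix.trace ((l.map c).prod * (c j * c j)) := by
            rw [neg_mul, Matrix.trace_neg, mul_assoc]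
        _ = - Matrix.trace ((l.map c).prod) := by rw [clif_sq c hClif, mul_one]
    linear_combination key / 2

/-- For `A ∈ 𝔄₋` expanded in the monomial basis, `Tr(A ϑ(A)) = 2^N |a₀|²`. -/
theorem trace_mul_reflect_eq_const_coeff
    (N : ℕ) (c : Fin (2 * N) → Matrix (Fin (2 ^ N)) (Fin (2 ^ N)) ℂ)
    (hClif : ∀ i j, c i * c j + c j * c i = if i = j then (2 : ℂ) • 1 else 0)
    (hSA : ∀ i, (c i)ᴴ = c i)
    (Λm Λp : Finset (Fin (2 * N))) (hdisj : Disjoint Λm Λp)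
    (hunion : Λm ∪ Λp = Finset.univ)
    (ρ : Equiv.Perm (Fin (2 * N))) (hρ : ∀ j, ρ (ρ j) = j)
    (hρm : ∀ j ∈ Λm, ρ j ∈ Λp)
    (θ : Matrix (Fin (2 ^ N)) (Fin (2 ^ N)) ℂ → Matrix (Fin (2 ^ N)) (Fin (2 ^ N)) ℂ)
    (hθadd : ∀ A B, θ (A + B) = θ A + θ B)
    (hθsmul : ∀ (z : ℂ) A, θ (z • A) = (starRingEnd ℂ) z • θ A)
    (hθmul : ∀ A B, θ (A * B) = θ A * θ B)
    (hθstar : ∀ A, θ Aᴴ = (θ A)ᴴ)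
    (hθtr : ∀ A, Matrix.trace (θ A) = (starRingEnd ℂ) (Matrix.trace A))
    (hθc : ∀ j, θ (c j) = c (ρ j))
    (A : Matrix (Fin (2 ^ N)) (Fin (2 ^ N)) ℂ)
    (a : Finset (Fin (2 * N)) → ℂ)
    (hA : A = ∑ β ∈ Λm.powerset, a β • cliffordMonomial c β) :
    Matrix.trace (A * θ A) = (2 : ℂ) ^ N * ((‖a ∅‖ : ℝ) : ℂ) ^ 2 := by
  have habs : ∀ z : ℂ, z * (starRingEnd ℂ) z = ((‖z‖ : ℝ) : ℂ) ^ 2 := by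
    intro z
    rw [Complex.mul_conj]
    norm_cast
    rw [Complex.sq_norm]
  have hθ0 : θ 0 = 0 := by simpa using hθsmul 0 0
  rcases Nat.eq_zero_or_pos N with hN | hN
  · subst hN
    have hΛm : Λm = ∅ := by
      ext x
      exact absurd x.isLt (by omega)
    have hone : cliffordMonomial c ∅ = 1 := by
      simp [cliffordMonomial]
    rw [hA, hΛm, Finset.powerset_empty, Finset.sum_singleton, hone, hθsmul,
      smul_mul_assoc, mul_smul_comm, Matrix.trace_smul, Matrix.trace_smul,
      one_mul, hθtr]
    have : Matrix.trace (1 : Matrix (Fin (2 ^ 0)) (Fin (2 ^ 0)) ℂ) = 1 := by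
      simp [Matrix.trace_one]
    rw [this]
    simp only [smul_eq_mul, pow_zero, one_mul]
    rw [map_one (starRingEnd ℂ), mul_one]
    exact habs _
  · have hm : Even (2 * N) := even_two_mul N
    have hθ1 : θ (1 : Matrix (Fin (2 ^ N)) (Fin (2 ^ N)) ℂ) = 1 := by
      have j : Fin (2 * N) := ⟨0, by omega⟩
      calc θ 1 = θ (c j * c j) := by rw [clif_sq c hClif]
        _ = c (ρ j) * c (ρ j) := by rw [hθmul, hθc]
        _ = 1 := clif_sq c hClif _
    have hθlist : ∀ l : List (Fin (2 * N)),
        θ ((l.map c).prod) = ((l.map ρ).map c).prod := by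
      intro l
      induction l with
      | nil => simpa using hθ1
      | cons i t ih => simp only [List.map_cons, List.prod_cons, hθmul, hθc, ih]
    have hcard : Matrix.trace (1 : Matrix (Fin (2 ^ N)) (Fin (2 ^ N)) ℂ)
        = (2 : ℂ) ^ N := by
      rw [Matrix.trace_one]
      simp
    have htr : ∀ β ∈ Λm.powerset, ∀ β' ∈ Λm.powerset,
        Matrix.trace (cliffordMonomial c β * θ (cliffordMonomial c β'))
          = if β = ∅ ∧ β' = ∅ then (2 : ℂ) ^ N else 0 := by
      intro β hβ β' hβ'
      rw [Finset.mem_powerset] at hβ hβ'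
      rw [cliffordMonomial, cliffordMonomial, hθlist]
      by_cases h : β = ∅ ∧ β' = ∅
      · obtain ⟨rfl, rfl⟩ := h
        simpa using hcard
      · rw [if_neg h, ← List.prod_append, ← List.map_append]
        apply clif_trace_prod_zero c hm hClif
        · rw [List.nodup_append]
          refine ⟨Finset.sort_nodup _ _, (Finset.sort_nodup _ _).map ρ.injective, ?_⟩
          intro x hx z hx' hxz
          obtain ⟨y, hy, rfl⟩ := List.mem_map.mp hx'
          subst hxz
          have h1 : ρ y ∈ Λm := hβ ((Finset.mem_sort _).mp hx)
          have h2 : ρ y ∈ Λp := hρm y (hβ' ((Finset.mem_sort _).mp hy))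
          exact (Finset.disjoint_left.mp hdisj h1) h2
        · intro hnil
          rw [List.append_eq_nil_iff] at hnil
          apply h
          have e1 : β = ∅ := by
            have h1 := Finset.length_sort (α := Fin (2 * N)) (· ≤ ·) (s := β)
            rw [hnil.1, List.length_nil] at h1
            exact Finset.card_eq_zero.mp h1.symm
          have e2 : β' = ∅ := by
            have hs : β'.sort (· ≤ ·) = [] := List.map_eq_nil_iff.mp hnil.2
            have h1 := Finset.length_sort (α := Fin (2 * N)) (· ≤ ·) (s := β')
            rw [hs, List.length_nil] at h1
            exact Finset.card_eq_zero.mp h1.symm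
          exact ⟨e1, e2⟩
    -- expand the sums
    let θ' : Matrix (Fin (2 ^ N)) (Fin (2 ^ N)) ℂ →+ Matrix (Fin (2 ^ N)) (Fin (2 ^ N)) ℂ :=
      { toFun := θ, map_zero' := hθ0, map_add' := hθadd }
    have hθsum : θ (∑ β ∈ Λm.powerset, a β • cliffordMonomial c β)
        = ∑ β ∈ Λm.powerset, (starRingEnd ℂ) (a β) • θ (cliffordMonomial c β) := by
      rw [show θ = θ' from rfl, map_sum]
      exact Finset.sum_congr rfl fun β _ => hθsmul _ _
    rw [hA, hθsum, Finset.sum_mul_sum, Matrix.trace_sum]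
    have hterm : ∀ β ∈ Λm.powerset, ∀ β' ∈ Λm.powerset,
        Matrix.trace ((a β • cliffordMonomial c β) *
          ((starRingEnd ℂ) (a β') • θ (cliffordMonomial c β')))
        = (a β * (starRingEnd ℂ) (a β')) *
            (if β = ∅ ∧ β' = ∅ then (2 : ℂ) ^ N else 0) := by
      intro β hβ β' hβ'
      rw [smul_mul_assoc, mul_smul_comm, Matrix.trace_smul, Matrix.trace_smul,
        htr β hβ β' hβ', smul_eq_mul, smul_eq_mul]
      ring
    calc ∑ β ∈ Λm.powerset, Matrix.trace (∑ β' ∈ Λm.powerset,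
            (a β • cliffordMonomial c β) *
              ((starRingEnd ℂ) (a β') • θ (cliffordMonomial c β')))
        = ∑ β ∈ Λm.powerset, ∑ β' ∈ Λm.powerset,
            (a β * (starRingEnd ℂ) (a β')) *
              (if β = ∅ ∧ β' = ∅ then (2 : ℂ) ^ N else 0) := by
          refine Finset.sum_congr rfl fun β hβ => ?_
          rw [Matrix.trace_sum]
          exact Finset.sum_congr rfl fun β' hβ' => hterm β hβ β' hβ'
      _ = a ∅ * (starRingEnd ℂ) (a ∅) * (2 : ℂ) ^ N := by
          rw [Finset.sum_eq_single ∅]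
          · rw [Finset.sum_eq_single ∅]
            · simp
            · intro β' _ hne
              simp [hne]
            · intro habs2
              exact absurd (Finset.empty_mem_powerset Λm) habs2
          · intro β _ hne
            apply Finset.sum_eq_zero
            intro β' _
            simp [hne]
          · intro habs2
            exact absurd (Finset.empty_mem_powerset Λm) habs2
      _ = (2 : ℂ) ^ N * ((‖a ∅‖ : ℝ) : ℂ) ^ 2 := by
          rw [habs]; ring
end
end

section
/- Let N=1 with Majoranas c_1 ∈ 𝔄_-, c_2 = ϑ(c_1) ∈ 𝔄_+, H = -i c_1 ϑ(c_1), and A = c_1. Then Tr(A ϑ(A) e^{-H}) = -2i sinh(1), which is purely imaginary; hence reflection positivity fails on the full (non-even) fermionic algebra. -/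
open Matrix
open scoped ComplexOrder

noncomputable section

/-- Counterexample: for `N = 1`, `H = -i c₁ ϑ(c₁)` and `A = c₁`, one has
`Tr(A ϑ(A) e^(-H)) = -2i sinh 1`, which is purely imaginary; hence reflection
positivity fails on the full (non-even) fermionic algebra. -/
theorem reflection_positivity_fails_on_odd_algebra
    (c₁ c₂ : Matrix (Fin 2) (Fin 2) ℂ)
    (h11 : c₁ * c₁ = 1) (h22 : c₂ * c₂ = 1)
    (h12 : c₁ * c₂ + c₂ * c₁ = 0)
    (hsa1 : c₁ᴴ = c₁) (hsa2 : c₂ᴴ = c₂)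
    (θ : Matrix (Fin 2) (Fin 2) ℂ → Matrix (Fin 2) (Fin 2) ℂ)
    (hθc1 : θ c₁ = c₂) (hθc2 : θ c₂ = c₁) :
    Matrix.trace (c₁ * θ c₁ * mexp (-(-Complex.I • (c₁ * θ c₁)))) =
      -2 * Complex.I * Real.sinh 1 := by
  rw [hθc1]
  have h21 : c₂ * c₁ = -(c₁ * c₂) := eq_neg_of_add_eq_zero_right h12
  have hK2 : (c₁ * c₂) * (c₁ * c₂) = -1 := by
    calc (c₁ * c₂) * (c₁ * c₂) = c₁ * (c₂ * c₁) * c₂ := by noncomm_ring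
    _ = -(c₁ * c₁ * (c₂ * c₂)) := by rw [h21]; noncomm_ring
    _ = -1 := by rw [h11, h22, one_mul]
  set K := c₁ * c₂ with hKdef
  have hM2 : (Complex.I • K) * (Complex.I • K) = 1 := by
    rw [smul_mul_smul_comm, hK2, Complex.I_mul_I]
    simp
  have hexp : mexp (-(-Complex.I • K)) =
      Complex.cosh 1 • (1 : Matrix (Fin 2) (Fin 2) ℂ) + Complex.sinh 1 • (Complex.I • K) := by
    have : -(-Complex.I • K) = Complex.I • K := by simp
    rw [this, mexp, NormedSpace.exp_eq_tsum ℂ]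
    refine HasSum.tsum_eq ?_
    refine HasSum.even_add_odd ?_ ?_
    · have := (Complex.hasSum_cosh 1).smul_const (1 : Matrix (Fin 2) (Fin 2) ℂ)
      convert this using 2 with n
      · rfl
      have hpow : (Complex.I • K) ^ (2 * n) = 1 := by
        rw [pow_mul, sq, hM2, one_pow]
      rw [hpow, one_pow, one_div]
    · have := (Complex.hasSum_sinh 1).smul_const (Complex.I • K)
      convert this using 2 with n
      · rfl
      have hpow : (Complex.I • K) ^ (2 * n + 1) = Complex.I • K := by
        rw [pow_succ, pow_mul, sq, hM2, one_pow, one_mul]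
      rw [hpow, one_pow, one_div]
  rw [hexp]
  have htrK : Matrix.trace K = 0 := by
    have h1 : Matrix.trace (c₁ * c₂) = Matrix.trace (c₂ * c₁) := Matrix.trace_mul_comm _ _
    rw [h21, trace_neg] at h1
    linear_combination h1 / 2
  have hKexp : K * (Complex.cosh 1 • (1 : Matrix (Fin 2) (Fin 2) ℂ)
      + Complex.sinh 1 • (Complex.I • K))
      = Complex.cosh 1 • K + (Complex.sinh 1 * Complex.I) • (K * K) := by
    rw [mul_add, mul_smul_comm, mul_one, mul_smul_comm, mul_smul_comm, smul_smul]
  rw [hKexp, trace_add, trace_smul, trace_smul, htrK, hK2, trace_neg, trace_one]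
  have : (Real.sinh 1 : ℂ) = Complex.sinh 1 := Complex.ofReal_sinh 1
  rw [this]
  simp [Fintype.card_fin]
  ring
end
end

section
/- Counting Lemma: With A ∈ 𝔄_-^even, H_± ∈ 𝔄_±^even, and Y_{ℓ_1,…,ℓ_k} = ∏_{i=1}^k [C_{𝔍_{ℓ_i}} ϑ(C_{𝔍_{ℓ_i}}) e^{-H_- /k} e^{-ϑ(H_-)/k}], the trace Tr(A ϑ(A) Y_{ℓ_1,…,ℓ_k}) vanishes unless Σ_{i=1}^k |𝔍_{ℓ_i}| is even; and in that case Σ_{i=1}^k σ(𝔍_{ℓ_i}) ≡ 0 mod 2. -/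
open Matrix
open scoped ComplexOrder

noncomputable section

lemma list_prod_mul_reverse_prod {d : ℕ} :
    ∀ (l : List (Matrix (Fin d) (Fin d) ℂ)), (∀ x ∈ l, x * x = 1) →
      l.prod * l.reverse.prod = 1
  | [], _ => by simp
  | a :: t, h => by
    have ht := list_prod_mul_reverse_prod t (fun x hx => h x (List.mem_cons_of_mem _ hx))
    have ha := h a (List.mem_cons_self)
    simp only [List.prod_cons, List.reverse_cons, List.prod_append, List.prod_cons,
      List.prod_nil, mul_one]
    rw [mul_assoc, ← mul_assoc t.prod, ht, one_mul, ha]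

lemma cj_mul_list_prod {m d : ℕ} (c : Fin m → Matrix (Fin d) (Fin d) ℂ)
    (hClif : ∀ i j, c i * c j + c j * c i = if i = j then (2:ℂ) • 1 else 0) (j : Fin m) :
    ∀ (l : List (Fin m)),
      c j * (l.map c).prod = ((-1:ℂ) ^ (l.count j + l.length)) • ((l.map c).prod * c j)
  | [] => by simp
  | a :: t => by
    have ih := cj_mul_list_prod c hClif j t
    simp only [List.map_cons, List.prod_cons, List.length_cons]
    by_cases haj : a = j
    · have hcomm : c j * c a = c a * c j := by rw [haj]
      have hexp : (-1:ℂ) ^ ((a :: t).count j + (t.length + 1)) = (-1) ^ (t.count j + t.length) := by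
        rw [haj, List.count_cons_self,
          show t.count j + 1 + (t.length + 1) = t.count j + t.length + 2 by ring, pow_add]
        norm_num
      rw [← mul_assoc, hcomm, mul_assoc, ih, mul_smul_comm, hexp, mul_assoc]
    · have hanti : c j * c a = -(c a * c j) := by
        have h0 := hClif j a
        rw [if_neg (fun h => haj h.symm)] at h0
        exact eq_neg_of_add_eq_zero_left h0
      have hexp : (-1:ℂ) ^ ((a :: t).count j + (t.length + 1)) = -(-1) ^ (t.count j + t.length) := by
        rw [List.count_cons_of_ne haj,
          show t.count j + (t.length + 1) = t.count j + t.length + 1 by ring, pow_succ]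
        ring
      rw [← mul_assoc, hanti, neg_mul, mul_assoc, ih, mul_smul_comm, ← neg_smul, hexp, mul_assoc]

/-- Counting lemma: with `A ∈ 𝔄₋ᵉᵛᵉⁿ` and
`Y = ∏ᵢ C_(𝔍ᵢ) ϑ(C_(𝔍ᵢ)) e^(-H₋/k) e^(-ϑ(H₋)/k)`, the trace `Tr(A ϑ(A) Y)`
vanishes unless `Σᵢ |𝔍ᵢ|` is even, in which case `Σᵢ σ(𝔍ᵢ) ≡ 0 mod 2`. -/
theorem counting_lemma
    (N : ℕ) (c : Fin (2 * N) → Matrix (Fin (2 ^ N)) (Fin (2 ^ N)) ℂ)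
    (hClif : ∀ i j, c i * c j + c j * c i = if i = j then (2 : ℂ) • 1 else 0)
    (hSA : ∀ i, (c i)ᴴ = c i)
    (Λm Λp : Finset (Fin (2 * N))) (hdisj : Disjoint Λm Λp)
    (hunion : Λm ∪ Λp = Finset.univ)
    (ρ : Equiv.Perm (Fin (2 * N))) (hρ : ∀ j, ρ (ρ j) = j)
    (hρm : ∀ j ∈ Λm, ρ j ∈ Λp)
    (θ : Matrix (Fin (2 ^ N)) (Fin (2 ^ N)) ℂ → Matrix (Fin (2 ^ N)) (Fin (2 ^ N)) ℂ)
    (hθadd : ∀ A B, θ (A + B) = θ A + θ B)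
    (hθsmul : ∀ (z : ℂ) A, θ (z • A) = (starRingEnd ℂ) z • θ A)
    (hθmul : ∀ A B, θ (A * B) = θ A * θ B)
    (hθstar : ∀ A, θ Aᴴ = (θ A)ᴴ)
    (hθtr : ∀ A, Matrix.trace (θ A) = (starRingEnd ℂ) (Matrix.trace A))
    (hθc : ∀ j, θ (c j) = c (ρ j))
    (Hm : Matrix (Fin (2 ^ N)) (Fin (2 ^ N)) ℂ)
    (hHm : Hm ∈ evenAlgebra c Λm) (hHmsa : Hmᴴ = Hm)
    (k : ℕ) (𝔍 : Fin k → Finset (Fin (2 * N))) (h𝔍 : ∀ i, 𝔍 i ⊆ Λm)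
    (A : Matrix (Fin (2 ^ N)) (Fin (2 ^ N)) ℂ) (hA : A ∈ evenAlgebra c Λm) :
    (¬ Even (∑ i, (𝔍 i).card) →
      Matrix.trace (A * θ A * (List.ofFn fun i : Fin k =>
        cliffordMonomial c (𝔍 i) * θ (cliffordMonomial c (𝔍 i)) *
          mexp (-((k : ℂ)⁻¹ • Hm)) * mexp (-((k : ℂ)⁻¹ • θ Hm))).prod) = 0) ∧
    (Even (∑ i, (𝔍 i).card) → (∑ i, (𝔍 i).card % 2) % 2 = 0) := by
  constructor
  · intro hodd
    have hsum_odd : Odd (∑ i, (𝔍 i).card) := by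
      rw [Nat.odd_iff]
      rw [Nat.even_iff] at hodd
      omega
    -- some 𝔍 i is nonempty
    obtain ⟨i0, hi0⟩ : ∃ i, (𝔍 i).Nonempty := by
      by_contra hcon
      push_neg at hcon
      apply hodd
      have hz : ∀ i, (𝔍 i).card = 0 := fun i =>
        Finset.card_eq_zero.mpr (hcon i)
      simp [hz]
    obtain ⟨j0, hj0⟩ := hi0
    have hj0m : j0 ∈ Λm := h𝔍 i0 hj0
    -- basic Clifford facts
    have hsq : ∀ i, c i * c i = 1 := by
      intro i
      have h0 := hClif i i
      rw [if_pos rfl] at h0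
      have h1 : (2:ℂ) • (c i * c i) = (2:ℂ) • (1 : Matrix (Fin (2 ^ N)) (Fin (2 ^ N)) ℂ) := by
        rw [two_smul]; exact h0
      exact smul_right_injective _ two_ne_zero h1
    have hθ1 : θ (1 : Matrix (Fin (2 ^ N)) (Fin (2 ^ N)) ℂ) = 1 := by
      have h1 : θ (c j0 * c j0) = c (ρ j0) * c (ρ j0) := by rw [hθmul, hθc]
      rw [hsq, hsq] at h1
      exact h1
    -- cardinalities
    have hcards : Λm.card + Λp.card = 2 * N := by
      rw [← Finset.card_union_of_disjoint hdisj, hunion, Finset.card_univ, Fintype.card_fin]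
    have hiff : (Even Λm.card ↔ Even Λp.card) := by
      have h2 : Even (Λm.card + Λp.card) := by rw [hcards]; exact even_two_mul N
      rwa [Nat.even_add] at h2
    -- choice of the grading set
    obtain ⟨T, hTm, hTp⟩ : ∃ T : Finset (Fin (2 * N)),
        (∀ j ∈ Λm, Odd ((if j ∈ T then 1 else 0) + T.card)) ∧
        (∀ j ∉ Λm, Even ((if j ∈ T then 1 else 0) + T.card)) := by
      by_cases hc : Even Λm.card
      · refine ⟨Λm, fun j hj => ?_, fun j hj => ?_⟩
        · rw [if_pos hj, Nat.odd_iff]; rw [Nat.even_iff] at hc; omega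
        · rw [if_neg hj, Nat.even_iff]; rw [Nat.even_iff] at hc; omega
      · have hcp : ¬ Even Λp.card := fun h => hc (hiff.mpr h)
        rw [Nat.even_iff] at hcp
        refine ⟨Λp, fun j hj => ?_, fun j hj => ?_⟩
        · have hjp : j ∉ Λp := Finset.disjoint_left.mp hdisj hj
          rw [if_neg hjp, Nat.odd_iff]; omega
        · have hjp : j ∈ Λp := by
            have hu : j ∈ Λm ∪ Λp := by rw [hunion]; exact Finset.mem_univ j
            rcases Finset.mem_union.mp hu with h | h
            · exact absurd h hj
            · exact h
          rw [if_pos hjp, Nat.even_iff]; omega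
    set lT : List (Fin (2 * N)) := T.sort (· ≤ ·) with hlT
    set X := (lT.map c).prod with hXdef
    set R := ((lT.map c).reverse).prod with hRdef
    have hsqmem : ∀ x ∈ lT.map c, x * x = 1 := by
      intro x hx
      obtain ⟨i, _, rfl⟩ := List.mem_map.mp hx
      exact hsq i
    have hXR : X * R = 1 := list_prod_mul_reverse_prod _ hsqmem
    have hRX : R * X = 1 := by
      have h := list_prod_mul_reverse_prod ((lT.map c).reverse)
        (fun x hx => hsqmem x (List.mem_reverse.mp hx))
      rwa [List.reverse_reverse] at h
    -- the grading action on single Majoranas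
    have hact : ∀ j, X * c j * R = (if j ∈ Λm then -c j else c j) := by
      intro j
      have hkey := cj_mul_list_prod c hClif j lT
      have hcnt : lT.count j + lT.length = (if j ∈ T then 1 else 0) + T.card := by
        have hl : lT.length = T.card := Finset.length_sort _
        have hcc : lT.count j = if j ∈ T then 1 else 0 := by
          by_cases hjT : j ∈ T
          · rw [if_pos hjT]
            exact List.count_eq_one_of_mem (Finset.sort_nodup _ _) ((Finset.mem_sort _).mpr hjT)
          · rw [if_neg hjT]
            exact List.count_eq_zero_of_not_mem (fun h => hjT ((Finset.mem_sort _).mp h))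
        rw [hl, hcc]
      by_cases hjm : j ∈ Λm
      · rw [if_pos hjm]
        have ho : Odd (lT.count j + lT.length) := by rw [hcnt]; exact hTm j hjm
        rw [ho.neg_one_pow, neg_one_smul] at hkey
        have h2 : X * c j = -(c j * X) := by rw [hkey, neg_neg]
        rw [h2, neg_mul, mul_assoc, hXR, mul_one]
      · rw [if_neg hjm]
        have he : Even (lT.count j + lT.length) := by rw [hcnt]; exact hTp j hjm
        rw [he.neg_one_pow, one_smul] at hkey
        rw [← hkey, mul_assoc, hXR, mul_one]
    -- multiplicativity of the grading map
    have hαmul : ∀ a b : Matrix (Fin (2 ^ N)) (Fin (2 ^ N)) ℂ,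
        (X * a * R) * (X * b * R) = X * (a * b) * R := by
      intro a b
      rw [mul_assoc (X * a) R, ← mul_assoc R (X * b), ← mul_assoc R X, hRX, one_mul,
        ← mul_assoc, mul_assoc X a b]
    -- even algebra elements are fixed
    have hfixAlg : ∀ z ∈ evenAlgebra c Λm, X * z * R = z := by
      intro z hz
      have hz' : z ∈ Algebra.adjoin ℂ {x | ∃ i ∈ Λm, ∃ j ∈ Λm, x = c i * c j} := hz
      clear hz
      induction hz' using Algebra.adjoin_induction with
      | mem x hx =>
        obtain ⟨i, hi, j, hj, rfl⟩ := hx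
        rw [← hαmul, hact, hact, if_pos hi, if_pos hj, neg_mul_neg]
      | algebraMap r =>
        rw [Algebra.algebraMap_eq_smul_one, mul_smul_comm, mul_one, smul_mul_assoc, hXR]
      | add x y hx hy ihx ihy => rw [mul_add, add_mul, ihx, ihy]
      | mul x y hx hy ihx ihy => rw [← hαmul, ihx, ihy]
    -- θ-images of even algebra elements are fixed
    have hfixθ : ∀ z ∈ evenAlgebra c Λm, X * θ z * R = θ z := by
      intro z hz
      have hz' : z ∈ Algebra.adjoin ℂ {x | ∃ i ∈ Λm, ∃ j ∈ Λm, x = c i * c j} := hz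
      clear hz
      induction hz' using Algebra.adjoin_induction with
      | mem x hx =>
        obtain ⟨i, hi, j, hj, rfl⟩ := hx
        have h1 : ρ i ∉ Λm := Finset.disjoint_right.mp hdisj (hρm i hi)
        have h2 : ρ j ∉ Λm := Finset.disjoint_right.mp hdisj (hρm j hj)
        rw [hθmul, hθc, hθc, ← hαmul, hact, hact, if_neg h1, if_neg h2]
      | algebraMap r =>
        rw [Algebra.algebraMap_eq_smul_one, hθsmul, hθ1, mul_smul_comm, mul_one,
          smul_mul_assoc, hXR]
      | add x y hx hy ihx ihy => rw [hθadd, mul_add, add_mul, ihx, ihy]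
      | mul x y hx hy ihx ihy => rw [hθmul, ← hαmul, ihx, ihy]
    -- exponentials
    have hαexp : ∀ M : Matrix (Fin (2 ^ N)) (Fin (2 ^ N)) ℂ,
        X * mexp M * R = mexp (X * M * R) := by
      intro M
      have h := Matrix.exp_units_conj (⟨X, R, hXR, hRX⟩ : (Matrix (Fin (2 ^ N)) (Fin (2 ^ N)) ℂ)ˣ) M
      exact h.symm
    have hHmfix : X * Hm * R = Hm := hfixAlg Hm hHm
    have hθHmfix : X * θ Hm * R = θ Hm := hfixθ Hm hHm
    set E1 := mexp (-((k : ℂ)⁻¹ • Hm)) with hE1def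
    set E2 := mexp (-((k : ℂ)⁻¹ • θ Hm)) with hE2def
    have hfixE1 : X * E1 * R = E1 := by
      rw [hE1def, hαexp, mul_neg, neg_mul, mul_smul_comm, smul_mul_assoc, hHmfix]
    have hfixE2 : X * E2 * R = E2 := by
      rw [hE2def, hαexp, mul_neg, neg_mul, mul_smul_comm, smul_mul_assoc, hθHmfix]
    -- monomials
    have hαC : ∀ (l : List (Fin (2 * N))), (∀ x ∈ l, x ∈ Λm) →
        X * (l.map c).prod * R = ((-1:ℂ) ^ l.length) • ((l.map c).prod) := by
      intro l
      induction l with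
      | nil =>
        intro _
        simp only [List.map_nil, List.prod_nil, List.length_nil, pow_zero, one_smul, mul_one]
        exact hXR
      | cons a t ih =>
        intro hmem
        simp only [List.map_cons, List.prod_cons, List.length_cons]
        rw [← hαmul, hact, if_pos (hmem a (List.mem_cons_self)),
          ih (fun x hx => hmem x (List.mem_cons_of_mem _ hx)),
          neg_mul, mul_smul_comm, pow_succ, mul_neg_one, neg_smul]
    have hαθC : ∀ (l : List (Fin (2 * N))), (∀ x ∈ l, x ∈ Λm) →
        X * θ ((l.map c).prod) * R = θ ((l.map c).prod) := by
      intro l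
      induction l with
      | nil =>
        intro _
        simp only [List.map_nil, List.prod_nil]
        rw [hθ1, mul_one, hXR]
      | cons a t ih =>
        intro hmem
        simp only [List.map_cons, List.prod_cons]
        rw [hθmul, hθc, ← hαmul, hact,
          if_neg (Finset.disjoint_right.mp hdisj (hρm a (hmem a (List.mem_cons_self)))),
          ih (fun x hx => hmem x (List.mem_cons_of_mem _ hx))]
    have hmono : ∀ J : Finset (Fin (2 * N)), J ⊆ Λm →
        X * cliffordMonomial c J * R = ((-1:ℂ) ^ J.card) • cliffordMonomial c J := by
      intro J hJ
      have h := hαC (J.sort (· ≤ ·)) (fun x hx => hJ ((Finset.mem_sort _).mp hx))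
      rw [Finset.length_sort] at h
      simpa only [cliffordMonomial] using h
    have hmonoθ : ∀ J : Finset (Fin (2 * N)), J ⊆ Λm →
        X * θ (cliffordMonomial c J) * R = θ (cliffordMonomial c J) := by
      intro J hJ
      have h := hαθC (J.sort (· ≤ ·)) (fun x hx => hJ ((Finset.mem_sort _).mp hx))
      simpa only [cliffordMonomial] using h
    -- one factor
    have hfac : ∀ J : Finset (Fin (2 * N)), J ⊆ Λm →
        X * (cliffordMonomial c J * θ (cliffordMonomial c J) * E1 * E2) * R
          = ((-1:ℂ) ^ J.card) • (cliffordMonomial c J * θ (cliffordMonomial c J) * E1 * E2) := by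
      intro J hJ
      rw [← hαmul, ← hαmul, ← hαmul, hmono J hJ, hmonoθ J hJ, hfixE1, hfixE2]
      simp only [smul_mul_assoc]
    -- the full product
    have hprod : ∀ (n : ℕ) (𝔎 : Fin n → Finset (Fin (2 * N))), (∀ i, 𝔎 i ⊆ Λm) →
        X * (List.ofFn fun i : Fin n =>
            cliffordMonomial c (𝔎 i) * θ (cliffordMonomial c (𝔎 i)) * E1 * E2).prod * R
          = ((-1:ℂ) ^ (∑ i, (𝔎 i).card)) •
            (List.ofFn fun i : Fin n =>
              cliffordMonomial c (𝔎 i) * θ (cliffordMonomial c (𝔎 i)) * E1 * E2).prod := by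
      intro n
      induction n with
      | zero =>
        intro 𝔎 h
        simp only [List.ofFn_zero, List.prod_nil, mul_one, Finset.univ_eq_empty,
          Finset.sum_empty, pow_zero, one_smul]
        exact hXR
      | succ n ih =>
        intro 𝔎 h
        simp only [List.ofFn_succ, List.prod_cons, Fin.sum_univ_succ]
        rw [← hαmul, hfac _ (h 0), ih (fun i => 𝔎 i.succ) (fun i => h i.succ), pow_add,
          smul_mul_assoc, mul_smul_comm, smul_smul]
    -- assemble
    set P := (List.ofFn fun i : Fin k =>
      cliffordMonomial c (𝔍 i) * θ (cliffordMonomial c (𝔍 i)) * E1 * E2).prod with hPdef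
    have hXZR : X * (A * θ A * P) * R
        = ((-1:ℂ) ^ (∑ i, (𝔍 i).card)) • (A * θ A * P) := by
      rw [hPdef, ← hαmul, ← hαmul, hfixAlg A hA, hfixθ A hA, hprod k 𝔍 h𝔍, mul_smul_comm]
    have htr1 : Matrix.trace (X * (A * θ A * P) * R) = Matrix.trace (A * θ A * P) := by
      rw [Matrix.trace_mul_comm, ← mul_assoc, hRX, one_mul]
    have hS : ((-1:ℂ)) ^ (∑ i, (𝔍 i).card) = -1 := Odd.neg_one_pow hsum_odd
    have hfin : Matrix.trace (A * θ A * P) = -Matrix.trace (A * θ A * P) := by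
      conv_lhs => rw [← htr1]
      rw [hXZR, hS, Matrix.trace_smul, neg_one_smul]
    linear_combination hfin / 2
  · intro heven
    rw [← Finset.sum_nat_mod]
    exact Nat.even_iff.mp heven
end
end

section
/- Sign Identity Lemma: Suppose Σ_{i=1}^k n_{ℓ_i} = 2𝔑 is even, where n_{ℓ_i} = |𝔍_{ℓ_i}|. Then Y_{ℓ_1,…,ℓ_k} = i^{-Σ_i σ(𝔍_{ℓ_i})} D ϑ(D), where D = C_{𝔍_{ℓ_1}} e^{-H_- /k} C_{𝔍_{ℓ_2}} e^{-H_- /k} ⋯ C_{𝔍_{ℓ_k}} e^{-H_- /k} ∈ 𝔄_- and Y_{ℓ_1,…,ℓ_k} = ∏_{i=1}^k [C_{𝔍_{ℓ_i}} ϑ(C_{𝔍_{ℓ_i}}) e^{-H_- /k} e^{-ϑ(H_-)/k}]. -/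
open Matrix
open scoped ComplexOrder

noncomputable section

namespace SignAux

/-- Sum of off-diagonal products `Σ_{i<j} n_i n_j` of a list. -/
def offdiag : List ℕ → ℕ
  | [] => 0
  | n :: t => n * t.sum + offdiag t

lemma offdiag_key : ∀ l : List ℕ, (l.map (· ^ 2)).sum + 2 * offdiag l = l.sum ^ 2
  | [] => by simp [offdiag]
  | n :: t => by
    have ih := offdiag_key t
    simp only [List.map_cons, List.sum_cons, offdiag]
    have h : (n + t.sum) ^ 2 = n ^ 2 + 2 * (n * t.sum) + t.sum ^ 2 := by ring
    rw [h]
    linarith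

lemma sq_mod (n : ℕ) : ∃ K, n ^ 2 = n % 2 + 4 * K := by
  rcases Nat.even_or_odd n with ⟨a, rfl⟩ | ⟨a, rfl⟩
  · exact ⟨a ^ 2, by have : (a + a) ^ 2 = 4 * a ^ 2 := by ring
                     omega⟩
  · exact ⟨a ^ 2 + a, by have : (2 * a + 1) ^ 2 = 4 * (a ^ 2 + a) + 1 := by ring
                         omega⟩

lemma sum_sq_mod : ∀ l : List ℕ, ∃ K, (l.map (· ^ 2)).sum = (l.map (· % 2)).sum + 4 * K
  | [] => ⟨0, by simp⟩
  | n :: t => by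
    obtain ⟨K, hK⟩ := sum_sq_mod t
    obtain ⟨K', hK'⟩ := sq_mod n
    exact ⟨K' + K, by simp only [List.map_cons, List.sum_cons]; omega⟩

lemma sum_mod_parity : ∀ l : List ℕ, (l.map (· % 2)).sum % 2 = l.sum % 2
  | [] => rfl
  | n :: t => by
    have := sum_mod_parity t
    simp only [List.map_cons, List.sum_cons]
    omega

lemma neg_one_pow_mod (n : ℕ) : ((-1 : ℂ)) ^ n = (-1 : ℂ) ^ (n % 2) := by
  conv_lhs => rw [← Nat.div_add_mod n 2]
  rw [pow_add, pow_mul, neg_one_sq, one_pow, one_mul]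

lemma sign_eq (l : List ℕ) (h : Even l.sum) :
    ((-1 : ℂ)) ^ offdiag l = Complex.I ^ (-(((l.map (· % 2)).sum : ℕ) : ℤ)) := by
  obtain ⟨m, hm⟩ := h
  have hs : (l.map (· % 2)).sum % 2 = 0 := by
    rw [sum_mod_parity]; omega
  obtain ⟨t, ht⟩ : ∃ t, (l.map (· % 2)).sum = 2 * t := ⟨(l.map (· % 2)).sum / 2, by omega⟩
  have key := offdiag_key l
  obtain ⟨K, hK⟩ := sum_sq_mod l
  have hsq : l.sum ^ 2 = 4 * m ^ 2 := by rw [hm]; ring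
  have hpar : offdiag l % 2 = t % 2 := by
    generalize m ^ 2 = m2 at hsq
    omega
  have hI : Complex.I ^ (-(((l.map (· % 2)).sum : ℕ) : ℤ)) = (-1 : ℂ) ^ t := by
    rw [ht]
    push_cast
    rw [_root_.zpow_neg]
    have : Complex.I ^ ((2 * t : ℕ) : ℤ) = ((-1 : ℂ)) ^ t := by
      rw [zpow_natCast, pow_mul, Complex.I_sq]
    rw [show ((2 : ℤ) * (t : ℤ)) = ((2 * t : ℕ) : ℤ) by push_cast; ring, this]
    rw [← inv_pow, inv_neg, inv_one]
  rw [hI, neg_one_pow_mod, neg_one_pow_mod t, hpar]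

variable {d : ℕ}

local notation "M" => Matrix (Fin d) (Fin d) ℂ

lemma move_single (b : M) : ∀ (l : List M), (∀ a ∈ l, a * b = -(b * a)) →
    b * l.prod = (-1 : ℂ) ^ l.length • (l.prod * b)
  | [], _ => by simp
  | a :: t, h => by
    have ha : b * a = -(a * b) := by rw [h a (by simp), neg_neg]
    have ht := move_single b t (fun x hx => h x (by simp [hx]))
    simp only [List.prod_cons, List.length_cons]
    calc b * (a * t.prod) = (b * a) * t.prod := by rw [mul_assoc]
      _ = -(a * (b * t.prod)) := by rw [ha]; simp [mul_assoc]
      _ = -(a * ((-1 : ℂ) ^ t.length • (t.prod * b))) := by rw [ht]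
      _ = (-1 : ℂ) ^ (t.length + 1) • (a * t.prod * b) := by
            rw [mul_smul_comm, pow_succ]
            simp [smul_smul, mul_assoc]

lemma move_list (l₁ : List M) : ∀ (l₂ : List M),
    (∀ a ∈ l₁, ∀ b ∈ l₂, a * b = -(b * a)) →
    l₂.prod * l₁.prod = (-1 : ℂ) ^ (l₂.length * l₁.length) • (l₁.prod * l₂.prod)
  | [], _ => by simp
  | b :: t, h => by
    have hb := move_single (d := d) b l₁ (fun a ha => h a ha b (by simp))
    have ht := move_list l₁ t (fun a ha x hx => h a ha x (by simp [hx]))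
    simp only [List.prod_cons, List.length_cons]
    calc (b * t.prod) * l₁.prod = b * (t.prod * l₁.prod) := by rw [mul_assoc]
      _ = b * ((-1 : ℂ) ^ (t.length * l₁.length) • (l₁.prod * t.prod)) := by rw [ht]
      _ = (-1 : ℂ) ^ (t.length * l₁.length) • ((b * l₁.prod) * t.prod) := by
            rw [mul_smul_comm, mul_assoc]
      _ = (-1 : ℂ) ^ (t.length * l₁.length) • (((-1 : ℂ) ^ l₁.length • (l₁.prod * b)) * t.prod) := by
            rw [hb]
      _ = (-1 : ℂ) ^ ((t.length + 1) * l₁.length) • (l₁.prod * (b * t.prod)) := by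
            rw [smul_mul_assoc, smul_smul, ← pow_add, mul_assoc]
            ring_nf

/-- move `b` to the right through a product of `q.1 * E` factors. -/
lemma move_through (E b : M) (n : ℕ) (hbE : Commute b E) :
    ∀ (T : List (M × M × ℕ)),
    (∀ q ∈ T, b * q.1 = (-1 : ℂ) ^ (n * q.2.2) • (q.1 * b)) →
    b * (T.map fun q => q.1 * E).prod
      = (-1 : ℂ) ^ (n * (T.map fun q => q.2.2).sum) • ((T.map fun q => q.1 * E).prod * b)
  | [], _ => by simp
  | q :: T, h => by
    have hq := h q (by simp)
    have hT := move_through E b n hbE T (fun x hx => h x (by simp [hx]))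
    simp only [List.map_cons, List.prod_cons, List.sum_cons]
    set P := (T.map fun q => q.1 * E).prod with hPdef
    set S := (T.map fun q => q.2.2).sum with hSdef
    calc b * ((q.1 * E) * P) = ((b * q.1) * E) * P := by simp [mul_assoc]
      _ = (((-1 : ℂ) ^ (n * q.2.2) • (q.1 * b)) * E) * P := by rw [hq]
      _ = (-1 : ℂ) ^ (n * q.2.2) • (q.1 * ((b * E) * P)) := by
            simp [smul_mul_assoc, mul_assoc]
      _ = (-1 : ℂ) ^ (n * q.2.2) • (q.1 * ((E * b) * P)) := by rw [hbE.eq]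
      _ = (-1 : ℂ) ^ (n * q.2.2) • (q.1 * (E * (b * P))) := by rw [mul_assoc]
      _ = (-1 : ℂ) ^ (n * q.2.2) • (q.1 * (E * ((-1 : ℂ) ^ (n * S) • (P * b)))) := by
            rw [hT]
      _ = ((-1 : ℂ) ^ (n * q.2.2) * (-1 : ℂ) ^ (n * S)) • ((q.1 * E) * P * b) := by
            simp [mul_smul_comm, smul_smul, mul_assoc]
      _ = (-1 : ℂ) ^ (n * (q.2.2 + S)) • ((q.1 * E) * P * b) := by
            rw [← pow_add, ← Nat.mul_add]

/-- Main reordering lemma. -/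
lemma main_reorder (E F : M) (hEF : Commute E F) :
    ∀ (L : List (M × M × ℕ)),
    (∀ p ∈ L, ∀ q ∈ L, p.2.1 * q.1 = (-1 : ℂ) ^ (p.2.2 * q.2.2) • (q.1 * p.2.1)) →
    (∀ p ∈ L, Commute p.2.1 E) →
    (∀ p ∈ L, Commute F p.1) →
    (L.map fun p => p.1 * p.2.1 * E * F).prod
      = (-1 : ℂ) ^ offdiag (L.map fun p => p.2.2) •
          ((L.map fun p => p.1 * E).prod * (L.map fun p => p.2.1 * F).prod)
  | [], _, _, _ => by simp [offdiag]
  | p :: T, hBA, hEB, hFA => by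
    have ih := main_reorder E F hEF T (fun x hx y hy => hBA x (by simp [hx]) y (by simp [hy]))
      (fun x hx => hEB x (by simp [hx])) (fun x hx => hFA x (by simp [hx]))
    have hbE : Commute p.2.1 E := hEB p (by simp)
    have hmove := move_through E p.2.1 p.2.2 hbE T
      (fun q hq => hBA p (by simp) q (by simp [hq]))
    have hFP : Commute F (T.map fun q => q.1 * E).prod := by
      apply Commute.list_prod_right
      intro x hx
      obtain ⟨q, hq, rfl⟩ := List.mem_map.mp hx
      exact (hFA q (by simp [hq])).mul_right hEF.symm
    set P := (T.map fun q => q.1 * E).prod with hP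
    set Q := (T.map fun q => q.2.1 * F).prod with hQ
    simp only [List.map_cons, List.prod_cons, List.sum_cons, offdiag]
    rw [ih]
    set S := (T.map fun p => p.2.2).sum with hSdef
    rw [mul_smul_comm, pow_add, mul_comm ((-1 : ℂ) ^ (p.2.2 * S)) _, mul_smul]
    congr 1
    calc p.1 * p.2.1 * E * F * (P * Q)
        = p.1 * (p.2.1 * (E * (F * P * Q))) := by simp [mul_assoc]
      _ = p.1 * (p.2.1 * (E * (P * F * Q))) := by rw [hFP.eq]
      _ = p.1 * (p.2.1 * (E * P) * (F * Q)) := by simp [mul_assoc]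
      _ = p.1 * ((p.2.1 * E) * P * (F * Q)) := by simp [mul_assoc]
      _ = p.1 * ((E * p.2.1) * P * (F * Q)) := by rw [hbE.eq]
      _ = p.1 * (E * (p.2.1 * P) * (F * Q)) := by simp [mul_assoc]
      _ = p.1 * (E * ((-1 : ℂ) ^ (p.2.2 * S) • (P * p.2.1)) * (F * Q)) := by
            rw [hmove]
      _ = (-1 : ℂ) ^ (p.2.2 * S) • (p.1 * E * P * (p.2.1 * F * Q)) := by
            simp [mul_smul_comm, smul_mul_assoc, mul_assoc]

section Theta

variable (θ : Matrix (Fin d) (Fin d) ℂ → Matrix (Fin d) (Fin d) ℂ)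

lemma theta_pow (hθmul : ∀ A B, θ (A * B) = θ A * θ B) (hθ1 : θ 1 = 1)
    (A : M) (n : ℕ) : θ (A ^ n) = (θ A) ^ n := by
  induction n with
  | zero => simpa using hθ1
  | succ n ih => rw [pow_succ, hθmul, ih, pow_succ]

lemma theta_prod (hθmul : ∀ A B, θ (A * B) = θ A * θ B) (hθ1 : θ 1 = 1)
    (l : List M) : θ l.prod = (l.map θ).prod := by
  induction l with
  | nil => simpa using hθ1
  | cons a t ih => rw [List.prod_cons, hθmul, ih, List.map_cons, List.prod_cons]

lemma theta_neg (hθsmul : ∀ (z : ℂ) A, θ (z • A) = (starRingEnd ℂ) z • θ A)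
    (A : M) : θ (-A) = -θ A := by
  have := hθsmul (-1) A
  simpa using this

lemma theta_exp (hθadd : ∀ A B, θ (A + B) = θ A + θ B)
    (hθsmul : ∀ (z : ℂ) A, θ (z • A) = (starRingEnd ℂ) z • θ A)
    (hθmul : ∀ A B, θ (A * B) = θ A * θ B) (hθ1 : θ 1 = 1)
    (X : M) : θ (mexp X) = mexp (θ X) := by
  letI : SeminormedRing M := Matrix.linftyOpSemiNormedRing
  letI : NormedRing M := Matrix.linftyOpNormedRing
  letI : NormedAlgebra ℂ M := Matrix.linftyOpNormedAlgebra
  have hR : ∀ (r : ℝ) (A : M), θ (r • A) = r • θ A := by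
    intro r A
    rw [← algebraMap_smul ℂ r A, hθsmul]
    have : (starRingEnd ℂ) ((algebraMap ℝ ℂ) r) = algebraMap ℝ ℂ r := by
      simp [Complex.conj_ofReal]
    rw [this, algebraMap_smul ℂ r (θ A)]
  let θL : M →ₗ[ℝ] M := { toFun := θ, map_add' := hθadd, map_smul' := hR }
  let θC : M →L[ℝ] M := LinearMap.toContinuousLinearMap θL
  have hsum : Summable fun n : ℕ => ((Nat.factorial n : ℂ))⁻¹ • X ^ n :=
    NormedSpace.expSeries_summable' (𝕂 := ℂ) X
  have h1 : θ (mexp X) = θC (∑' n : ℕ, ((Nat.factorial n : ℂ))⁻¹ • X ^ n) := by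
    rw [mexp, NormedSpace.exp_eq_tsum ℂ]
    rfl
  rw [h1, θC.map_tsum hsum]
  rw [show mexp (θ X) = ∑' n : ℕ, ((Nat.factorial n : ℂ))⁻¹ • (θ X) ^ n by
    rw [mexp, NormedSpace.exp_eq_tsum ℂ]]
  congr 1
  funext n
  show θ (((Nat.factorial n : ℂ))⁻¹ • X ^ n) = ((Nat.factorial n : ℂ))⁻¹ • (θ X) ^ n
  rw [hθsmul, theta_pow θ hθmul hθ1]
  congr 1
  simp

end Theta

/-- Commutation with elements of an even algebra. -/
lemma commute_even {m : ℕ} (c : Fin m → M) (B : Finset (Fin m)) (a : M)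
    (ha : ∀ j ∈ B, c j * a = -(a * c j)) :
    ∀ x ∈ evenAlgebra c B, Commute a x := by
  intro x hx
  induction hx using Algebra.adjoin_induction with
  | mem y hy =>
    obtain ⟨i, hi, j, hj, rfl⟩ := hy
    have h1 : a * c i = -(c i * a) := by rw [ha i hi, neg_neg]
    have h2 : a * c j = -(c j * a) := by rw [ha j hj, neg_neg]
    show a * (c i * c j) = (c i * c j) * a
    calc a * (c i * c j) = (a * c i) * c j := by rw [mul_assoc]
      _ = -(c i * (a * c j)) := by rw [h1]; simp [mul_assoc]
      _ = c i * (c j * a) := by rw [h2]; simp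
      _ = (c i * c j) * a := by rw [mul_assoc]
  | algebraMap r => exact (Algebra.commutes r a).symm
  | add x y _ _ hx hy => exact hx.add_right hy
  | mul x y _ _ hx hy => exact hx.mul_right hy

end SignAux

open SignAux

/-- Sign identity lemma: if `Σᵢ |𝔍ᵢ|` is even then
`Y = i^(-Σᵢ σ(𝔍ᵢ)) D ϑ(D)` with `D = C_(𝔍₁) e^(-H₋/k) ⋯ C_(𝔍ₖ) e^(-H₋/k)`. -/
theorem sign_identity_lemma
    (N : ℕ) (c : Fin (2 * N) → Matrix (Fin (2 ^ N)) (Fin (2 ^ N)) ℂ)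
    (hClif : ∀ i j, c i * c j + c j * c i = if i = j then (2 : ℂ) • 1 else 0)
    (hSA : ∀ i, (c i)ᴴ = c i)
    (Λm Λp : Finset (Fin (2 * N))) (hdisj : Disjoint Λm Λp)
    (hunion : Λm ∪ Λp = Finset.univ)
    (ρ : Equiv.Perm (Fin (2 * N))) (hρ : ∀ j, ρ (ρ j) = j)
    (hρm : ∀ j ∈ Λm, ρ j ∈ Λp)
    (θ : Matrix (Fin (2 ^ N)) (Fin (2 ^ N)) ℂ → Matrix (Fin (2 ^ N)) (Fin (2 ^ N)) ℂ)
    (hθadd : ∀ A B, θ (A + B) = θ A + θ B)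
    (hθsmul : ∀ (z : ℂ) A, θ (z • A) = (starRingEnd ℂ) z • θ A)
    (hθmul : ∀ A B, θ (A * B) = θ A * θ B)
    (hθstar : ∀ A, θ Aᴴ = (θ A)ᴴ)
    (hθtr : ∀ A, Matrix.trace (θ A) = (starRingEnd ℂ) (Matrix.trace A))
    (hθc : ∀ j, θ (c j) = c (ρ j))
    (Hm : Matrix (Fin (2 ^ N)) (Fin (2 ^ N)) ℂ)
    (hHm : Hm ∈ evenAlgebra c Λm) (hHmsa : Hmᴴ = Hm)
    (k : ℕ) (𝔍 : Fin k → Finset (Fin (2 * N))) (h𝔍 : ∀ i, 𝔍 i ⊆ Λm)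
    (hEven : Even (∑ i, (𝔍 i).card)) :
    (List.ofFn fun i : Fin k =>
        cliffordMonomial c (𝔍 i) * θ (cliffordMonomial c (𝔍 i)) *
          mexp (-((k : ℂ)⁻¹ • Hm)) * mexp (-((k : ℂ)⁻¹ • θ Hm))).prod =
      Complex.I ^ (-((∑ i, (𝔍 i).card % 2 : ℕ) : ℤ)) •
        ((List.ofFn fun i : Fin k =>
            cliffordMonomial c (𝔍 i) * mexp (-((k : ℂ)⁻¹ • Hm))).prod *
          θ (List.ofFn fun i : Fin k =>
            cliffordMonomial c (𝔍 i) * mexp (-((k : ℂ)⁻¹ • Hm))).prod) := by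
  classical
  set E := mexp (-((k : ℂ)⁻¹ • Hm)) with hEdef
  set F := mexp (-((k : ℂ)⁻¹ • θ Hm)) with hFdef
  -- θ 1 = 1
  have hθ1 : θ 1 = 1 := by
    rcases Nat.eq_zero_or_pos N with hN | hN
    · subst hN
      have hmat : ∀ A : Matrix (Fin (2 ^ 0)) (Fin (2 ^ 0)) ℂ, A = Matrix.trace A • 1 := by
        intro A
        ext i j
        fin_cases i <;> fin_cases j <;> simp [Matrix.trace, Matrix.diag]
      have h1 := hθtr 1
      rw [Matrix.trace_one] at h1
      calc θ 1 = Matrix.trace (θ 1) • 1 := hmat _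
        _ = 1 := by rw [h1]; simp
    · have hsq : ∀ i, c i * c i = 1 := by
        intro i
        have h2 : (2 : ℂ) • (c i * c i) = (2 : ℂ) • (1 : Matrix (Fin (2 ^ N)) (Fin (2 ^ N)) ℂ) := by
          rw [two_smul]; simpa using hClif i i
        have := congrArg (fun X => (2 : ℂ)⁻¹ • X) h2
        simpa [smul_smul] using this
      have i0 : Fin (2 * N) := ⟨0, by omega⟩
      calc θ 1 = θ (c i0 * c i0) := by rw [hsq i0]
        _ = c (ρ i0) * c (ρ i0) := by rw [hθmul, hθc]
        _ = 1 := hsq (ρ i0)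
  -- anticommutation between Λm and Λp Majoranas
  have hac : ∀ x ∈ Λm, ∀ y ∈ Λp, c x * c y = -(c y * c x) := by
    intro x hx y hy
    have hxy : x ≠ y := fun h => Finset.disjoint_left.mp hdisj hx (h ▸ hy)
    have := hClif x y
    rw [if_neg hxy] at this
    exact eq_neg_of_add_eq_zero_left this
  -- θ Hm lives in the even algebra of Λp
  have hθHm : θ Hm ∈ evenAlgebra c Λp := by
    have key : ∀ x ∈ evenAlgebra c Λm, θ x ∈ evenAlgebra c Λp := by
      intro x hx
      induction hx using Algebra.adjoin_induction with
      | mem y hy =>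
        obtain ⟨i, hi, j, hj, rfl⟩ := hy
        rw [hθmul, hθc, hθc]
        exact Algebra.subset_adjoin ⟨ρ i, hρm i hi, ρ j, hρm j hj, rfl⟩
      | algebraMap r =>
        rw [Algebra.algebraMap_eq_smul_one, hθsmul, hθ1]
        exact Subalgebra.smul_mem _ (Subalgebra.one_mem _) _
      | add x y _ _ hx hy => rw [hθadd]; exact Subalgebra.add_mem _ hx hy
      | mul x y _ _ hx hy => rw [hθmul]; exact Subalgebra.mul_mem _ hx hy
    exact key Hm hHm
  -- commutation of Majoranas with E and F
  have hcE : ∀ y ∈ Λp, Commute (c y) E := by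
    intro y hy
    have h0 : Commute (c y) Hm :=
      commute_even c Λm (c y) (fun j hj => hac j hj y hy) Hm hHm
    exact ((h0.smul_right ((k : ℂ)⁻¹)).neg_right).exp_right
  have hcθHm : ∀ x ∈ Λm, Commute (c x) (θ Hm) := by
    intro x hx
    exact commute_even c Λp (c x)
      (fun j hj => by rw [hac x hx j hj, neg_neg]) (θ Hm) hθHm
  have hcF : ∀ x ∈ Λm, Commute (c x) F := by
    intro x hx
    exact (((hcθHm x hx).smul_right ((k : ℂ)⁻¹)).neg_right).exp_right
  have hEF : Commute E F := by
    have hHmθ : Commute Hm (θ Hm) := by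
      have : ∀ x ∈ evenAlgebra c Λm, Commute x (θ Hm) := by
        intro x hx
        induction hx using Algebra.adjoin_induction with
        | mem y hy =>
          obtain ⟨i, hi, j, hj, rfl⟩ := hy
          exact (hcθHm i hi).mul_left (hcθHm j hj)
        | algebraMap r => exact Algebra.commutes r (θ Hm)
        | add x y _ _ hx hy => exact hx.add_left hy
        | mul x y _ _ hx hy => exact hx.mul_left hy
      exact this Hm hHm
    exact (((hHmθ.smul_left _).smul_right _).neg_left.neg_right).exp
  -- θ of a Clifford monomial
  have hθmono : ∀ β : Finset (Fin (2 * N)),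
      θ (cliffordMonomial c β) = ((β.sort (· ≤ ·)).map fun x => c (ρ x)).prod := by
    intro β
    rw [cliffordMonomial, theta_prod θ hθmul hθ1, List.map_map]
    congr 1
    apply List.map_congr_left
    intro x _
    exact hθc x
  -- θ E = F
  have hθE : θ E = F := by
    rw [hEdef, theta_exp θ hθadd hθsmul hθmul hθ1, theta_neg θ hθsmul, hθsmul]
    have : (starRingEnd ℂ) ((k : ℂ)⁻¹) = (k : ℂ)⁻¹ := by
      rw [map_inv₀, map_natCast]
    rw [this]
  -- the anticommutation of monomials
  have hBA : ∀ i j : Fin k, θ (cliffordMonomial c (𝔍 i)) * cliffordMonomial c (𝔍 j)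
      = (-1 : ℂ) ^ ((𝔍 i).card * (𝔍 j).card) •
          (cliffordMonomial c (𝔍 j) * θ (cliffordMonomial c (𝔍 i))) := by
    intro i j
    rw [hθmono, cliffordMonomial]
    have := move_list (((𝔍 j).sort (· ≤ ·)).map c) (((𝔍 i).sort (· ≤ ·)).map fun x => c (ρ x))
      (by
        intro a ha b hb
        obtain ⟨x, hx, rfl⟩ := List.mem_map.mp ha
        obtain ⟨y, hy, rfl⟩ := List.mem_map.mp hb
        have hxm : x ∈ Λm := h𝔍 j ((Finset.mem_sort _).mp hx)
        have hyp : ρ y ∈ Λp := hρm y (h𝔍 i ((Finset.mem_sort _).mp hy))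
        exact hac x hxm (ρ y) hyp)
    simpa [Finset.length_sort, mul_comm] using this
  -- commutation of θ-monomials with E
  have hBE : ∀ i : Fin k, Commute (θ (cliffordMonomial c (𝔍 i))) E := by
    intro i
    rw [hθmono]
    refine (Commute.list_prod_right _ E ?_).symm
    intro x hx
    obtain ⟨y, hy, rfl⟩ := List.mem_map.mp hx
    exact (hcE (ρ y) (hρm y (h𝔍 i ((Finset.mem_sort _).mp hy)))).symm
  -- commutation of F with monomials
  have hFA : ∀ i : Fin k, Commute F (cliffordMonomial c (𝔍 i)) := by
    intro i
    rw [cliffordMonomial]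
    refine Commute.list_prod_right _ F ?_
    intro x hx
    obtain ⟨y, hy, rfl⟩ := List.mem_map.mp hx
    exact (hcF y (h𝔍 i ((Finset.mem_sort _).mp hy))).symm
  -- assemble via the reordering lemma
  set L : List (Matrix (Fin (2 ^ N)) (Fin (2 ^ N)) ℂ × Matrix (Fin (2 ^ N)) (Fin (2 ^ N)) ℂ × ℕ) :=
    List.ofFn (fun i : Fin k =>
      (cliffordMonomial c (𝔍 i), θ (cliffordMonomial c (𝔍 i)), (𝔍 i).card)) with hLdef
  have hmain := main_reorder E F hEF L
    (by
      rintro p hp q hq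
      obtain ⟨i, rfl⟩ := List.mem_ofFn.mp hp
      obtain ⟨j, rfl⟩ := List.mem_ofFn.mp hq
      exact hBA i j)
    (by
      rintro p hp
      obtain ⟨i, rfl⟩ := List.mem_ofFn.mp hp
      exact hBE i)
    (by
      rintro p hp
      obtain ⟨i, rfl⟩ := List.mem_ofFn.mp hp
      exact hFA i)
  have hmap1 : (L.map fun p => p.1 * p.2.1 * E * F)
      = List.ofFn (fun i : Fin k => cliffordMonomial c (𝔍 i) * θ (cliffordMonomial c (𝔍 i)) * E * F) := by
    rw [hLdef, List.map_ofFn]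
    rfl
  have hmap2 : (L.map fun p => p.1 * E)
      = List.ofFn (fun i : Fin k => cliffordMonomial c (𝔍 i) * E) := by
    rw [hLdef, List.map_ofFn]
    rfl
  have hmap3 : (L.map fun p => p.2.1 * F)
      = List.ofFn (fun i : Fin k => θ (cliffordMonomial c (𝔍 i)) * F) := by
    rw [hLdef, List.map_ofFn]
    rfl
  have hmapn : (L.map fun p => p.2.2) = List.ofFn (fun i : Fin k => (𝔍 i).card) := by
    rw [hLdef, List.map_ofFn]
    rfl
  -- the sign
  have hsum : (L.map fun p => p.2.2).sum = ∑ i, (𝔍 i).card := by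
    rw [hmapn, List.sum_ofFn]
  have hsign : (-1 : ℂ) ^ offdiag (L.map fun p => p.2.2)
      = Complex.I ^ (-((∑ i, (𝔍 i).card % 2 : ℕ) : ℤ)) := by
    have h2 : ((L.map fun p => p.2.2).map (· % 2)).sum = ∑ i, (𝔍 i).card % 2 := by
      rw [hmapn, List.map_ofFn, List.sum_ofFn]
      rfl
    rw [sign_eq _ (by rw [hsum]; exact hEven), h2]
  -- θ of the product D
  have hθD : θ (List.ofFn fun i : Fin k => cliffordMonomial c (𝔍 i) * E).prod
      = (List.ofFn fun i : Fin k => θ (cliffordMonomial c (𝔍 i)) * F).prod := by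
    rw [theta_prod θ hθmul hθ1, List.map_ofFn]
    have hfn : (θ ∘ fun i : Fin k => cliffordMonomial c (𝔍 i) * E)
        = fun i : Fin k => θ (cliffordMonomial c (𝔍 i)) * F := by
      funext i
      show θ (cliffordMonomial c (𝔍 i) * E) = _
      rw [hθmul, hθE]
    rw [hfn]
  calc (List.ofFn fun i : Fin k =>
          cliffordMonomial c (𝔍 i) * θ (cliffordMonomial c (𝔍 i)) * E * F).prod
      = (L.map fun p => p.1 * p.2.1 * E * F).prod := by rw [hmap1]
    _ = (-1 : ℂ) ^ offdiag (L.map fun p => p.2.2) •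
          ((L.map fun p => p.1 * E).prod * (L.map fun p => p.2.1 * F).prod) := hmain
    _ = Complex.I ^ (-((∑ i, (𝔍 i).card % 2 : ℕ) : ℤ)) •
          ((List.ofFn fun i : Fin k => cliffordMonomial c (𝔍 i) * E).prod *
            θ (List.ofFn fun i : Fin k => cliffordMonomial c (𝔍 i) * E).prod) := by
        rw [hsign, hmap2, hmap3, hθD]
end
end
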